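/- For every positive integer k, the number of points of S whose degree in the underlying graph of S is at least n − 2k + 1 is at most 2k. -/

import Mathlib

open scoped Classical


/-- Planar cross product (signed area determinant) of two vectors in `ℝ × ℝ`. -/
def det2 (u v : ℝ × ℝ) : ℝ := u.1 * v.2 - u.2 * v.1

/-- Dot product of two vectors in `ℝ × ℝ`. -/
def dot2 (u v : ℝ × ℝ) : ℝ := u.1 * v.1 + u.2 * v.2

/-- A finite set of points of the plane is in general position if no three
distinct points of it are collinear. -/
def GenPos (S : Finset (ℝ × ℝ)) : Prop :=
  ∀ P ∈ S, ∀ Q ∈ S, ∀ R ∈ S, P ≠ Q → P ≠ R → Q ≠ R →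
    ¬ Collinear ℝ ({P, Q, R} : Set (ℝ × ℝ))

/-- The line through the two distinct points `P, Q ∈ S` is a halving line of `S`:
each of the two open half-planes it determines contains exactly
`(S.card - 2) / 2` points of `S`. -/
def IsHalving (S : Finset (ℝ × ℝ)) (P Q : ℝ × ℝ) : Prop :=
  P ∈ S ∧ Q ∈ S ∧ P ≠ Q ∧
  {X ∈ (S : Set (ℝ × ℝ)) | 0 < det2 (Q - P) (X - P)}.ncard = (S.card - 2) / 2 ∧
  {X ∈ (S : Set (ℝ × ℝ)) | det2 (Q - P) (X - P) < 0}.ncard = (S.card - 2) / 2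

/-- Degree of a point in the underlying graph of `S`: the number of points `Q`
such that the line `PQ` is a halving line of `S`. -/
noncomputable def hdeg (S : Finset (ℝ × ℝ)) (P : ℝ × ℝ) : ℕ :=
  {Q : ℝ × ℝ | IsHalving S P Q}.ncard

/-- The number of halving lines of `S`, counted as unordered pairs of points. -/
noncomputable def numHalvingLines (S : Finset (ℝ × ℝ)) : ℕ :=
  {e : Finset (ℝ × ℝ) | ∃ P Q : ℝ × ℝ, e = {P, Q} ∧ IsHalving S P Q}.ncard

/-- The underlying graph of `S`: vertices are the points of `S`, and two points
are adjacent exactly when the line through them is a halving line of `S`. -/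
def underlyingGraph (S : Finset (ℝ × ℝ)) : SimpleGraph {x : ℝ × ℝ // x ∈ S} where
  Adj P Q := IsHalving S P.1 Q.1 ∧ IsHalving S Q.1 P.1
  symm := ⟨fun _ _ h => ⟨h.2, h.1⟩⟩
  loopless := ⟨fun _ h => h.1.2.2.1 rfl⟩


lemma det2_identity (u a b : ℝ × ℝ) :
    dot2 u a * det2 u b - det2 u a * dot2 u b = (u.1 ^ 2 + u.2 ^ 2) * det2 a b := by
  simp only [det2, dot2]; ring

lemma exists_smul_of_det2_eq_zero {a b : ℝ × ℝ} (ha : a ≠ 0) (h : det2 a b = 0) :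
    ∃ r : ℝ, b = r • a := by
  simp only [det2] at h
  by_cases h1 : a.1 = 0
  · have h2 : a.2 ≠ 0 := fun h2 => ha (Prod.ext h1 h2)
    have hb1 : b.1 = 0 := by
      have : a.2 * b.1 = 0 := by rw [h1] at h; linarith
      rcases mul_eq_zero.mp this with h' | h'
      · exact absurd h' h2
      · exact h'
    refine ⟨b.2 / a.2, Prod.ext ?_ ?_⟩
    · simp [hb1, h1]
    · simp only [Prod.smul_snd, smul_eq_mul]
      field_simp
  · refine ⟨b.1 / a.1, Prod.ext ?_ ?_⟩
    · simp only [Prod.smul_fst, smul_eq_mul]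
      field_simp
    · simp only [Prod.smul_snd, smul_eq_mul]
      field_simp
      linarith [h]

lemma collinear_of_det2 {P Q X : ℝ × ℝ} (hQP : Q ≠ P)
    (h : det2 (Q - P) (X - P) = 0) : Collinear ℝ ({P, Q, X} : Set (ℝ × ℝ)) := by
  rw [collinear_iff_of_mem (Set.mem_insert P {Q, X})]
  refine ⟨Q - P, fun q hq => ?_⟩
  simp only [Set.mem_insert_iff, Set.mem_singleton_iff] at hq
  rcases hq with rfl | rfl | rfl
  · exact ⟨0, by simp⟩
  · exact ⟨1, by simp⟩
  · obtain ⟨r, hr⟩ := exists_smul_of_det2_eq_zero (sub_ne_zero.mpr hQP) h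
    refine ⟨r, ?_⟩
    have : q - P = r • (Q - P) := hr
    simp only [vadd_eq_add]
    linear_combination (norm := module) this

lemma exists_generic (S : Finset (ℝ × ℝ)) :
    ∃ u : ℝ × ℝ, 0 < u.1 ^ 2 + u.2 ^ 2 ∧
      ∀ P ∈ S, ∀ Q ∈ S, P ≠ Q → dot2 u (Q - P) ≠ 0 := by
  obtain ⟨t, ht⟩ := Infinite.exists_notMem_finset
    ((S ×ˢ S).image (fun p : (ℝ × ℝ) × (ℝ × ℝ) => -(p.2 - p.1).1 / (p.2 - p.1).2))
  refine ⟨(1, t), by norm_num; positivity, ?_⟩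
  intro P hP Q hQ hne hdot
  simp only [dot2] at hdot
  by_cases h2 : (Q - P).2 = 0
  · have h1 : (Q - P).1 = 0 := by rw [h2] at hdot; simpa using hdot
    have hz : Q - P = 0 := by
      rw [Prod.ext_iff]; exact ⟨by simpa using h1, by simpa using h2⟩
    exact hne (sub_eq_zero.mp hz).symm
  · apply ht
    refine Finset.mem_image.mpr ⟨(P, Q), Finset.mem_product.mpr ⟨hP, hQ⟩, ?_⟩
    have h2' : Q.2 - P.2 ≠ 0 := by simpa using h2
    show -(Q - P).1 / (Q - P).2 = t
    simp only [Prod.fst_sub, Prod.snd_sub]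
    rw [div_eq_iff h2']
    simp only [Prod.fst_sub, Prod.snd_sub] at hdot
    linarith

lemma tri_pp {a b c : ℝ} (ha : 0 < a) (hb : 0 < b) : 0 < a * b * c ↔ 0 < c := by
  constructor
  · intro h; by_contra hc; push_neg at hc; nlinarith [mul_pos ha hb]
  · intro h; exact mul_pos (mul_pos ha hb) h
lemma tri_pn {a b c : ℝ} (ha : 0 < a) (hb : b < 0) : 0 < a * b * c ↔ c < 0 := by
  constructor
  · intro h; by_contra hc; push_neg at hc; nlinarith [mul_pos ha (neg_pos.mpr hb)]
  · intro h; nlinarith [mul_pos (mul_pos ha (neg_pos.mpr hb)) (neg_pos.mpr h)]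
lemma tri_np {a b c : ℝ} (ha : a < 0) (hb : 0 < b) : 0 < a * b * c ↔ c < 0 := by
  rw [show a * b * c = b * a * c by ring]; exact tri_pn hb ha
lemma tri_nn {a b c : ℝ} (ha : a < 0) (hb : b < 0) : 0 < a * b * c ↔ 0 < c := by
  rw [show a * b * c = (-a) * (-b) * c by ring]
  exact tri_pp (neg_pos.mpr ha) (neg_pos.mpr hb)

lemma key (S : Finset (ℝ × ℝ)) (hgp : GenPos S) (u : ℝ × ℝ)
    (hu : 0 < u.1 ^ 2 + u.2 ^ 2)
    (hgen : ∀ P ∈ S, ∀ Q ∈ S, P ≠ Q → dot2 u (Q - P) ≠ 0)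
    (m : ℕ) (hm : S.card = 2 * m + 2) (P : ℝ × ℝ) (hP : P ∈ S) :
    hdeg S P ≤ 2 * (S.filter (fun X => dot2 u (X - P) < 0)).card + 1 := by
  set T : Finset (ℝ × ℝ) := S.erase P with hT
  set xf : (ℝ × ℝ) → ℝ := fun Q => dot2 u (Q - P) with hxf
  set sf : (ℝ × ℝ) → ℝ := fun Q => det2 u (Q - P) / dot2 u (Q - P) with hsf
  have hTsub : T ⊆ S := Finset.erase_subset _ _
  have hTcard : T.card = 2 * m + 1 := by
    rw [hT, Finset.card_erase_of_mem hP, hm]; omega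
  have hx : ∀ Q ∈ T, xf Q ≠ 0 := by
    intro Q hQ
    exact hgen P hP Q (hTsub hQ) (fun h => (Finset.mem_erase.mp hQ).1 h.symm)
  -- the fundamental sign identity
  have hident : ∀ Q ∈ T, ∀ X ∈ T,
      xf Q * xf X * (sf X - sf Q) = (u.1 ^ 2 + u.2 ^ 2) * det2 (Q - P) (X - P) := by
    intro Q hQ X hX
    have ha := hx Q hQ
    have hb := hx X hX
    simp only [hxf, hsf] at ha hb ⊢
    have key2 := det2_identity u (Q - P) (X - P)
    have e1 : det2 u (X - P) / dot2 u (X - P) * dot2 u (X - P) = det2 u (X - P) :=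
      div_mul_cancel₀ _ hb
    have e2 : det2 u (Q - P) / dot2 u (Q - P) * dot2 u (Q - P) = det2 u (Q - P) :=
      div_mul_cancel₀ _ ha
    linear_combination key2 + dot2 u (Q - P) * e1 - dot2 u (X - P) * e2
  have hsign : ∀ Q ∈ T, ∀ X ∈ T,
      (0 < det2 (Q - P) (X - P) ↔ 0 < xf Q * xf X * (sf X - sf Q)) := by
    intro Q hQ X hX
    rw [hident Q hQ X hX]
    constructor
    · intro h; exact mul_pos hu h
    · intro h; by_contra hc; push_neg at hc; nlinarith
  -- injectivity of the slope map
  have hsinj : ∀ Q ∈ T, ∀ X ∈ T, sf Q = sf X → Q = X := by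
    intro Q hQ X hX hs
    by_contra hne
    have hQP : Q ≠ P := (Finset.mem_erase.mp hQ).1
    have hXP : X ≠ P := (Finset.mem_erase.mp hX).1
    have h0 : xf Q * xf X * (sf X - sf Q) = 0 := by rw [hs]; ring
    have h1 : (u.1 ^ 2 + u.2 ^ 2) * det2 (Q - P) (X - P) = 0 :=
      (hident Q hQ X hX).symm.trans h0
    have hdet : det2 (Q - P) (X - P) = 0 := by
      rcases mul_eq_zero.mp h1 with h | h
      · exact absurd h (ne_of_gt hu)
      · exact h
    exact (hgp P hP Q (hTsub hQ) X (hTsub hX) (Ne.symm hQP) (Ne.symm hXP) hne)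
      (collinear_of_det2 hQP hdet)
  -- the sweep counters
  set G : (ℝ × ℝ) → ℕ := fun Q =>
    (T.filter (fun X => (xf X < 0 ∧ sf X ≤ sf Q) ∨ (0 < xf X ∧ sf Q < sf X))).card with hG
  set Gm : (ℝ × ℝ) → ℕ := fun Q =>
    (T.filter (fun X => (xf X < 0 ∧ sf X < sf Q) ∨ (0 < xf X ∧ sf Q ≤ sf X))).card with hGm
  have hGrel1 : ∀ Q ∈ T, 0 < xf Q → Gm Q = G Q + 1 := by
    intro Q hQ hxQ
    have hnot : Q ∉ T.filter
        (fun X => (xf X < 0 ∧ sf X ≤ sf Q) ∨ (0 < xf X ∧ sf Q < sf X)) := by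
      intro hmem
      rcases Finset.mem_filter.mp hmem with ⟨-, ⟨h1, -⟩ | ⟨-, h2⟩⟩
      · linarith
      · exact lt_irrefl _ h2
    have hins : T.filter (fun X => (xf X < 0 ∧ sf X < sf Q) ∨ (0 < xf X ∧ sf Q ≤ sf X))
        = insert Q (T.filter
            (fun X => (xf X < 0 ∧ sf X ≤ sf Q) ∨ (0 < xf X ∧ sf Q < sf X))) := by
      ext X
      simp only [Finset.mem_filter, Finset.mem_insert]
      constructor
      · rintro ⟨hXT, hp⟩
        by_cases hXQ : X = Q
        · exact Or.inl hXQ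
        · refine Or.inr ⟨hXT, ?_⟩
          rcases hp with ⟨h1, h2⟩ | ⟨h1, h2⟩
          · exact Or.inl ⟨h1, le_of_lt h2⟩
          · refine Or.inr ⟨h1, lt_of_le_of_ne h2 ?_⟩
            intro he; exact hXQ (hsinj X hXT Q hQ he.symm)
      · rintro (rfl | ⟨hXT, hp⟩)
        · exact ⟨hQ, Or.inr ⟨hxQ, le_refl _⟩⟩
        · refine ⟨hXT, ?_⟩
          rcases hp with ⟨h1, h2⟩ | ⟨h1, h2⟩
          · refine Or.inl ⟨h1, lt_of_le_of_ne h2 ?_⟩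
            intro he
            have hXQ : X = Q := hsinj X hXT Q hQ he
            rw [hXQ] at h1; linarith
          · exact Or.inr ⟨h1, le_of_lt h2⟩
    simp only [hGm, hG]
    rw [hins, Finset.card_insert_of_notMem hnot]
  have hGrel2 : ∀ Q ∈ T, xf Q < 0 → G Q = Gm Q + 1 := by
    intro Q hQ hxQ
    have hnot : Q ∉ T.filter
        (fun X => (xf X < 0 ∧ sf X < sf Q) ∨ (0 < xf X ∧ sf Q ≤ sf X)) := by
      intro hmem
      rcases Finset.mem_filter.mp hmem with ⟨-, ⟨-, h2⟩ | ⟨h1, -⟩⟩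
      · exact lt_irrefl _ h2
      · linarith
    have hins : T.filter (fun X => (xf X < 0 ∧ sf X ≤ sf Q) ∨ (0 < xf X ∧ sf Q < sf X))
        = insert Q (T.filter
            (fun X => (xf X < 0 ∧ sf X < sf Q) ∨ (0 < xf X ∧ sf Q ≤ sf X))) := by
      ext X
      simp only [Finset.mem_filter, Finset.mem_insert]
      constructor
      · rintro ⟨hXT, hp⟩
        by_cases hXQ : X = Q
        · exact Or.inl hXQ
        · refine Or.inr ⟨hXT, ?_⟩
          rcases hp with ⟨h1, h2⟩ | ⟨h1, h2⟩
          · refine Or.inl ⟨h1, lt_of_le_of_ne h2 ?_⟩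
            intro he; exact hXQ (hsinj X hXT Q hQ he)
          · exact Or.inr ⟨h1, le_of_lt h2⟩
      · rintro (rfl | ⟨hXT, hp⟩)
        · exact ⟨hQ, Or.inl ⟨hxQ, le_refl _⟩⟩
        · refine ⟨hXT, ?_⟩
          rcases hp with ⟨h1, h2⟩ | ⟨h1, h2⟩
          · exact Or.inl ⟨h1, le_of_lt h2⟩
          · refine Or.inr ⟨h1, lt_of_le_of_ne h2 ?_⟩
            intro he
            have hXQ : X = Q := hsinj X hXT Q hQ he.symm
            rw [hXQ] at h1; linarith
    simp only [hGm, hG]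
    rw [hins, Finset.card_insert_of_notMem hnot]
  -- count on the positive side of line PQ
  have hcl1 : ∀ Q ∈ T, 0 < xf Q →
      (S.filter (fun X => 0 < det2 (Q - P) (X - P))).card = G Q := by
    intro Q hQ hxQ
    have hSf : S.filter (fun X => 0 < det2 (Q - P) (X - P))
        = T.filter (fun X => 0 < det2 (Q - P) (X - P)) := by
      conv_lhs => rw [← Finset.insert_erase hP]
      rw [Finset.filter_insert, if_neg (by simp [det2])]
    have hiff : ∀ X ∈ T, (0 < det2 (Q - P) (X - P)) ↔
        ((xf X < 0 ∧ sf X ≤ sf Q) ∨ (0 < xf X ∧ sf Q < sf X)) := by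
      intro X hX
      rw [hsign Q hQ X hX]
      rcases (hx X hX).lt_or_gt with hxX | hxX
      · rw [tri_pn hxQ hxX]
        constructor
        · intro h; exact Or.inl ⟨hxX, by linarith⟩
        · rintro (⟨-, h2⟩ | ⟨h1, -⟩)
          · have hne : sf X ≠ sf Q := fun he => by
              have hXQ := hsinj X hX Q hQ he
              rw [hXQ] at hxX; linarith
            have hlt := lt_of_le_of_ne h2 hne
            linarith
          · linarith
      · rw [tri_pp hxQ hxX]
        constructor
        · intro h; exact Or.inr ⟨hxX, by linarith⟩
        · rintro (⟨h1, -⟩ | ⟨-, h2⟩)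
          · linarith
          · linarith
    rw [hSf, Finset.filter_congr hiff]
  have hcl2 : ∀ Q ∈ T, xf Q < 0 →
      (S.filter (fun X => 0 < det2 (Q - P) (X - P))).card + G Q = 2 * m + 1 := by
    intro Q hQ hxQ
    have hSf : S.filter (fun X => 0 < det2 (Q - P) (X - P))
        = T.filter (fun X => 0 < det2 (Q - P) (X - P)) := by
      conv_lhs => rw [← Finset.insert_erase hP]
      rw [Finset.filter_insert, if_neg (by simp [det2])]
    have hiff : ∀ X ∈ T, (0 < det2 (Q - P) (X - P)) ↔
        ¬ ((xf X < 0 ∧ sf X ≤ sf Q) ∨ (0 < xf X ∧ sf Q < sf X)) := by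
      intro X hX
      rw [hsign Q hQ X hX]
      rcases (hx X hX).lt_or_gt with hxX | hxX
      · rw [tri_nn hxQ hxX]
        constructor
        · intro h
          rintro (⟨-, h2⟩ | ⟨h1, -⟩)
          · linarith
          · linarith
        · intro h
          have h2 : ¬ (sf X ≤ sf Q) := fun hle => h (Or.inl ⟨hxX, hle⟩)
          push_neg at h2
          linarith
      · rw [tri_np hxQ hxX]
        constructor
        · intro h
          rintro (⟨h1, -⟩ | ⟨-, h2⟩)
          · linarith
          · linarith
        · intro h
          have h2 : ¬ (sf Q < sf X) := fun hlt => h (Or.inr ⟨hxX, hlt⟩)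
          push_neg at h2
          have hne : sf X ≠ sf Q := fun he => by
            have hXQ := hsinj X hX Q hQ he
            rw [hXQ] at hxX; linarith
          have hlt := lt_of_le_of_ne h2 hne
          linarith
    rw [hSf, Finset.filter_congr hiff]
    have hadd := Finset.card_filter_add_card_filter_not (s := T)
      (p := fun X => (xf X < 0 ∧ sf X ≤ sf Q) ∨ (0 < xf X ∧ sf Q < sf X))
    simp only [hG]
    omega
  -- characterization of halving partners
  have hhalv : ∀ Q ∈ T, (IsHalving S P Q ↔
      ((0 < xf Q ∧ G Q = m) ∨ (xf Q < 0 ∧ G Q = m + 1))) := by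
    intro Q hQ
    have hQP : Q ≠ P := (Finset.mem_erase.mp hQ).1
    have hQS : Q ∈ S := hTsub hQ
    have hzero : S.filter (fun X => det2 (Q - P) (X - P) = 0) = {P, Q} := by
      ext X
      simp only [Finset.mem_filter, Finset.mem_insert, Finset.mem_singleton]
      constructor
      · rintro ⟨hXS, hdet⟩
        by_contra hc
        push_neg at hc
        exact (hgp P hP Q hQS X hXS (Ne.symm hQP) (Ne.symm hc.1) (Ne.symm hc.2))
          (collinear_of_det2 hQP hdet)
      · rintro (rfl | rfl)
        · exact ⟨hP, by simp [det2]⟩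
        · exact ⟨hQS, by simp only [det2]; ring⟩
    have hcard2 : ({P, Q} : Finset (ℝ × ℝ)).card = 2 := by
      rw [Finset.card_insert_of_notMem (by simp [Ne.symm hQP]), Finset.card_singleton]
    have htot : (S.filter (fun X => 0 < det2 (Q - P) (X - P))).card
        + (S.filter (fun X => det2 (Q - P) (X - P) < 0)).card = 2 * m := by
      have h1 := Finset.card_filter_add_card_filter_not (s := S)
        (p := fun X => 0 < det2 (Q - P) (X - P))
      have h2 := Finset.card_filter_add_card_filter_not
        (s := S.filter (fun X => ¬ 0 < det2 (Q - P) (X - P)))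
        (p := fun X => det2 (Q - P) (X - P) < 0)
      rw [Finset.filter_filter, Finset.filter_filter] at h2
      have e1 : S.filter (fun X => ¬ 0 < det2 (Q - P) (X - P) ∧ det2 (Q - P) (X - P) < 0)
          = S.filter (fun X => det2 (Q - P) (X - P) < 0) :=
        Finset.filter_congr (fun X _ => by
          constructor
          · exact And.right
          · intro h; exact ⟨not_lt.mpr (le_of_lt h), h⟩)
      have e2 : S.filter (fun X => ¬ 0 < det2 (Q - P) (X - P) ∧ ¬ det2 (Q - P) (X - P) < 0)
          = S.filter (fun X => det2 (Q - P) (X - P) = 0) :=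
        Finset.filter_congr (fun X _ => by
          constructor
          · rintro ⟨ha, hb⟩; exact le_antisymm (not_lt.mp ha) (not_lt.mp hb)
          · intro h; constructor <;> simp [h])
      rw [e1, e2, hzero, hcard2] at h2
      omega
    have hset1 : {X ∈ (S : Set (ℝ × ℝ)) | 0 < det2 (Q - P) (X - P)}.ncard
        = (S.filter (fun X => 0 < det2 (Q - P) (X - P))).card := by
      rw [show {X ∈ (S : Set (ℝ × ℝ)) | 0 < det2 (Q - P) (X - P)}
          = ↑(S.filter (fun X => 0 < det2 (Q - P) (X - P))) from by
        ext X; simp [Finset.mem_coe, Finset.mem_filter], Set.ncard_coe_finset]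
    have hset2 : {X ∈ (S : Set (ℝ × ℝ)) | det2 (Q - P) (X - P) < 0}.ncard
        = (S.filter (fun X => det2 (Q - P) (X - P) < 0)).card := by
      rw [show {X ∈ (S : Set (ℝ × ℝ)) | det2 (Q - P) (X - P) < 0}
          = ↑(S.filter (fun X => det2 (Q - P) (X - P) < 0)) from by
        ext X; simp [Finset.mem_coe, Finset.mem_filter], Set.ncard_coe_finset]
    have hm2 : (S.card - 2) / 2 = m := by omega
    constructor
    · rintro ⟨-, -, -, hc1, -⟩
      rw [hset1, hm2] at hc1
      rcases (hx Q hQ).lt_or_gt with hxQ | hxQ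
      · right; refine ⟨hxQ, ?_⟩
        have := hcl2 Q hQ hxQ; omega
      · left; refine ⟨hxQ, ?_⟩
        have := hcl1 Q hQ hxQ; omega
    · intro h
      have hcp : (S.filter (fun X => 0 < det2 (Q - P) (X - P))).card = m := by
        rcases h with ⟨hxQ, hGQ⟩ | ⟨hxQ, hGQ⟩
        · have := hcl1 Q hQ hxQ; omega
        · have := hcl2 Q hQ hxQ; omega
      refine ⟨hP, hQS, Ne.symm hQP, ?_, ?_⟩
      · rw [hset1, hm2]; exact hcp
      · rw [hset2, hm2]; omega
  -- no point strictly between two slopes: counters agree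
  have hstep : ∀ Q ∈ T, ∀ Q' ∈ T, sf Q < sf Q' →
      (∀ Z ∈ T, ¬(sf Q < sf Z ∧ sf Z < sf Q')) → G Q = Gm Q' := by
    intro Q hQ Q' hQ' hlt hbet
    simp only [hG, hGm]
    refine congrArg Finset.card (Finset.filter_congr ?_)
    intro Z hZ
    constructor
    · rintro (⟨h1, h2⟩ | ⟨h1, h2⟩)
      · exact Or.inl ⟨h1, lt_of_le_of_lt h2 hlt⟩
      · refine Or.inr ⟨h1, ?_⟩
        by_contra hc; push_neg at hc
        exact hbet Z hZ ⟨h2, hc⟩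
    · rintro (⟨h1, h2⟩ | ⟨h1, h2⟩)
      · refine Or.inl ⟨h1, ?_⟩
        by_contra hc; push_neg at hc
        exact hbet Z hZ ⟨hc, h2⟩
      · exact Or.inr ⟨h1, lt_of_lt_of_le hlt h2⟩
  -- discrete intermediate value theorem along the sweep
  have hivt : ∀ b : ℕ, ∀ Q ∈ T, ∀ Q' ∈ T, sf Q < sf Q' → G Q ≤ m → m + 1 ≤ Gm Q' →
      (T.filter (fun Z => sf Q < sf Z ∧ sf Z < sf Q')).card ≤ b →
      ∃ X ∈ T, sf Q < sf X ∧ sf X < sf Q' ∧ xf X < 0 ∧ G X = m + 1 := by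
    intro b
    induction b with
    | zero =>
      intro Q hQ Q' hQ' hlt hGQ hGm' hcard
      exfalso
      have hbet : ∀ Z ∈ T, ¬(sf Q < sf Z ∧ sf Z < sf Q') := by
        intro Z hZ hc
        have hmem : Z ∈ T.filter (fun Z => sf Q < sf Z ∧ sf Z < sf Q') :=
          Finset.mem_filter.mpr ⟨hZ, hc⟩
        have := Finset.card_pos.mpr ⟨Z, hmem⟩
        omega
      have := hstep Q hQ Q' hQ' hlt hbet
      omega
    | succ b ih =>
      intro Q hQ Q' hQ' hlt hGQ hGm' hcard
      by_cases hB : (T.filter (fun Z => sf Q < sf Z ∧ sf Z < sf Q')).Nonempty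
      · obtain ⟨X, hXB, hXmax⟩ := Finset.exists_max_image
          (T.filter (fun Z => sf Q < sf Z ∧ sf Z < sf Q')) sf hB
        have hXT : X ∈ T := (Finset.mem_filter.mp hXB).1
        obtain ⟨hQX, hXQ'⟩ := (Finset.mem_filter.mp hXB).2
        have hbet2 : ∀ Z ∈ T, ¬(sf X < sf Z ∧ sf Z < sf Q') := by
          rintro Z hZ ⟨hz1, hz2⟩
          have hZB : Z ∈ T.filter (fun Z => sf Q < sf Z ∧ sf Z < sf Q') :=
            Finset.mem_filter.mpr ⟨hZ, lt_trans hQX hz1, hz2⟩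
          have := hXmax Z hZB
          linarith
        have hGX : G X = Gm Q' := hstep X hXT Q' hQ' hXQ' hbet2
        by_cases hneg : xf X < 0 ∧ G X = m + 1
        · exact ⟨X, hXT, hQX, hXQ', hneg.1, hneg.2⟩
        · have hGmX : m + 1 ≤ Gm X := by
            rcases (hx X hXT).lt_or_gt with hxX | hxX
            · have hrel := hGrel2 X hXT hxX
              have hne : G X ≠ m + 1 := fun he => hneg ⟨hxX, he⟩
              omega
            · have hrel := hGrel1 X hXT hxX
              omega
          have hsub : T.filter (fun Z => sf Q < sf Z ∧ sf Z < sf X)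
              ⊆ (T.filter (fun Z => sf Q < sf Z ∧ sf Z < sf Q')).erase X := by
            intro Z hZ
            obtain ⟨hZT, hz1, hz2⟩ := Finset.mem_filter.mp hZ
            refine Finset.mem_erase.mpr
              ⟨?_, Finset.mem_filter.mpr ⟨hZT, hz1, lt_trans hz2 hXQ'⟩⟩
            intro he; rw [he] at hz2; exact lt_irrefl _ hz2
          have hcard2 : (T.filter (fun Z => sf Q < sf Z ∧ sf Z < sf X)).card ≤ b := by
            have h1 := Finset.card_le_card hsub
            have h2 := Finset.card_erase_of_mem hXB
            omega
          obtain ⟨Y, hYT, h1, h2, h3, h4⟩ := ih Q hQ X hXT hQX hGQ hGmX hcard2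
          exact ⟨Y, hYT, h1, lt_trans h2 hXQ', h3, h4⟩
      · exfalso
        have hbet : ∀ Z ∈ T, ¬(sf Q < sf Z ∧ sf Z < sf Q') := by
          intro Z hZ hc
          exact hB ⟨Z, Finset.mem_filter.mpr ⟨hZ, hc⟩⟩
        have := hstep Q hQ Q' hQ' hlt hbet
        omega
  -- the partner sets
  set Pa : Finset (ℝ × ℝ) := T.filter (fun Q => IsHalving S P Q) with hPa
  set PL : Finset (ℝ × ℝ) := Pa.filter (fun Q => xf Q < 0) with hPL
  set PR : Finset (ℝ × ℝ) := Pa.filter (fun Q => 0 < xf Q) with hPR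
  have hdeg_eq : hdeg S P = Pa.card := by
    have hset : {Q : ℝ × ℝ | IsHalving S P Q} = ↑Pa := by
      ext Q
      simp only [Set.mem_setOf_eq, Finset.mem_coe, hPa, Finset.mem_filter]
      constructor
      · intro h
        exact ⟨Finset.mem_erase.mpr ⟨fun he => h.2.2.1 he.symm, h.2.1⟩, h⟩
      · exact And.right
    unfold hdeg
    rw [hset, Set.ncard_coe_finset]
  have hsplit : Pa.card = PL.card + PR.card := by
    have hadd := Finset.card_filter_add_card_filter_not (s := Pa)
      (p := fun Q => xf Q < 0)
    have hre : Pa.filter (fun Q => ¬ xf Q < 0) = PR := by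
      simp only [hPR]
      apply Finset.filter_congr
      intro Q hQ
      have hQT : Q ∈ T := (Finset.mem_filter.mp hQ).1
      rcases (hx Q hQT).lt_or_gt with h | h
      · constructor
        · intro hn; exact absurd h hn
        · intro h0; linarith
      · constructor
        · intro _; exact h
        · intro _; linarith
    rw [← hPL, hre] at hadd
    omega
  have hPLle : PL.card ≤ (S.filter (fun X => dot2 u (X - P) < 0)).card := by
    apply Finset.card_le_card
    intro Q hQ
    obtain ⟨hQPa, hxQ⟩ := Finset.mem_filter.mp hQ
    have hQT : Q ∈ T := (Finset.mem_filter.mp hQPa).1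
    exact Finset.mem_filter.mpr ⟨hTsub hQT, hxQ⟩
  have hPRle : PR.card ≤ PL.card + 1 := by
    rcases PR.eq_empty_or_nonempty with hPRe | hPRne
    · rw [hPRe]; simp
    · obtain ⟨M, hM, hMmax⟩ := Finset.exists_max_image PR sf hPRne
      have hPRmem : ∀ Q, Q ∈ PR → Q ∈ T ∧ 0 < xf Q ∧ G Q = m := by
        intro Q hQ
        obtain ⟨hQPa, hxQ⟩ := Finset.mem_filter.mp hQ
        obtain ⟨hQT, hQH⟩ := Finset.mem_filter.mp hQPa
        rcases (hhalv Q hQT).mp hQH with ⟨-, hGQ⟩ | ⟨hxneg, -⟩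
        · exact ⟨hQT, hxQ, hGQ⟩
        · linarith
      have hex : ∀ Q ∈ PR.erase M, ∃ X, X ∈ PL ∧ sf Q < sf X ∧
          ∀ Z ∈ PR, sf Q < sf Z → sf X < sf Z := by
        intro Q hQe
        obtain ⟨hQM, hQPR⟩ := Finset.mem_erase.mp hQe
        obtain ⟨hQT, hxQ, hGQ⟩ := hPRmem Q hQPR
        have hAne : (PR.filter (fun Z => sf Q < sf Z)).Nonempty := by
          refine ⟨M, Finset.mem_filter.mpr ⟨hM, ?_⟩⟩
          rcases lt_or_eq_of_le (hMmax Q hQPR) with h | h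
          · exact h
          · obtain ⟨hMT, -, -⟩ := hPRmem M hM
            exact absurd (hsinj Q hQT M hMT h) hQM
        obtain ⟨Q'', hQ''A, hQ''min⟩ :=
          Finset.exists_min_image (PR.filter (fun Z => sf Q < sf Z)) sf hAne
        obtain ⟨hQ''PR, hQQ''⟩ := Finset.mem_filter.mp hQ''A
        obtain ⟨hQ''T, hxQ'', hGQ''⟩ := hPRmem Q'' hQ''PR
        have hGm'' : m + 1 ≤ Gm Q'' := by
          have := hGrel1 Q'' hQ''T hxQ''
          omega
        obtain ⟨X, hXT, hXl, hXr, hXneg, hXG⟩ :=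
          hivt T.card Q hQT Q'' hQ''T hQQ'' (le_of_eq hGQ) hGm''
            (Finset.card_le_card (Finset.filter_subset _ _))
        refine ⟨X, ?_, hXl, ?_⟩
        · have hXH : IsHalving S P X := (hhalv X hXT).mpr (Or.inr ⟨hXneg, hXG⟩)
          exact Finset.mem_filter.mpr ⟨Finset.mem_filter.mpr ⟨hXT, hXH⟩, hXneg⟩
        · intro Z hZPR hQZ
          have := hQ''min Z (Finset.mem_filter.mpr ⟨hZPR, hQZ⟩)
          linarith
      have hinj : (PR.erase M).card ≤ PL.card := by
        set f : (ℝ × ℝ) → (ℝ × ℝ) := fun Q =>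
          if h : ∃ X, X ∈ PL ∧ sf Q < sf X ∧ ∀ Z ∈ PR, sf Q < sf Z → sf X < sf Z
          then h.choose else Q with hf
        have hfval : ∀ Q ∈ PR.erase M, f Q ∈ PL ∧ sf Q < sf (f Q) ∧
            ∀ Z ∈ PR, sf Q < sf Z → sf (f Q) < sf Z := by
          intro Q hQe
          have hE := hex Q hQe
          have : f Q = hE.choose := by rw [hf]; exact dif_pos hE
          rw [this]
          exact hE.choose_spec
        apply Finset.card_le_card_of_injOn f (fun Q hQ => (hfval Q hQ).1)
        intro Q1 hQ1 Q2 hQ2 hfeq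
        simp only [Finset.mem_coe] at hQ1 hQ2
        by_contra hne
        obtain ⟨hQ1T, -, -⟩ := hPRmem Q1 (Finset.mem_erase.mp hQ1).2
        obtain ⟨hQ2T, -, -⟩ := hPRmem Q2 (Finset.mem_erase.mp hQ2).2
        obtain ⟨-, h1lt, h1min⟩ := hfval Q1 hQ1
        obtain ⟨-, h2lt, h2min⟩ := hfval Q2 hQ2
        rcases lt_trichotomy (sf Q1) (sf Q2) with h | h | h
        · have hs := h1min Q2 (Finset.mem_erase.mp hQ2).2 h
          rw [hfeq] at hs
          linarith
        · exact hne (hsinj Q1 hQ1T Q2 hQ2T h)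
        · have hs := h2min Q1 (Finset.mem_erase.mp hQ1).2 h
          rw [← hfeq] at hs
          linarith
      have hMcard : PR.card = (PR.erase M).card + 1 := by
        rw [Finset.card_erase_of_mem hM]
        have := Finset.card_pos.mpr ⟨M, hM⟩
        omega
      omega
  omega

/-- for every positive integer `k`, at most `2k` points of `S`
have degree at least `n - 2k + 1` in the underlying graph. -/
theorem stmt_14 (S : Finset (ℝ × ℝ)) (heven : Even S.card) (h4 : 4 ≤ S.card)
    (hgp : GenPos S) :
    ∀ k : ℕ, 1 ≤ k →
      {P : ℝ × ℝ | P ∈ S ∧ (S.card : ℤ) - 2 * k + 1 ≤ (hdeg S P : ℤ)}.ncard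
        ≤ 2 * k := by
  intro k hk
  obtain ⟨u, hu, hgen⟩ := exists_generic S
  obtain ⟨r, hr⟩ := heven
  have hm : S.card = 2 * (r - 1) + 2 := by omega
  set m : ℕ := r - 1 with hmdef
  have hA : {P : ℝ × ℝ | P ∈ S ∧ (S.card : ℤ) - 2 * k + 1 ≤ (hdeg S P : ℤ)}
      = ↑(S.filter (fun P => (S.card : ℤ) - 2 * k + 1 ≤ (hdeg S P : ℤ))) := by
    ext P; simp [Finset.mem_filter]
  rw [hA, Set.ncard_coe_finset]
  set A := S.filter (fun P => (S.card : ℤ) - 2 * k + 1 ≤ (hdeg S P : ℤ)) with hAdef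
  set L : (ℝ × ℝ) → ℤ :=
    fun P => ((S.filter (fun X => dot2 u (X - P) < 0)).card : ℤ) with hL
  set R : (ℝ × ℝ) → ℤ :=
    fun P => ((S.filter (fun X => 0 < dot2 u (X - P))).card : ℤ) with hR
  have hLR : ∀ P ∈ S, L P + R P = (S.card : ℤ) - 1 := by
    intro P hP
    have h1 := Finset.card_filter_add_card_filter_not (s := S)
      (p := fun X => dot2 u (X - P) < 0)
    have h2 := Finset.card_filter_add_card_filter_not
      (s := S.filter (fun X => ¬ dot2 u (X - P) < 0)) (p := fun X => 0 < dot2 u (X - P))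
    rw [Finset.filter_filter, Finset.filter_filter] at h2
    have e1 : S.filter (fun X => ¬ dot2 u (X - P) < 0 ∧ 0 < dot2 u (X - P))
        = S.filter (fun X => 0 < dot2 u (X - P)) :=
      Finset.filter_congr (fun X _ => by
        constructor
        · exact And.right
        · intro h; exact ⟨not_lt.mpr (le_of_lt h), h⟩)
    have e2 : S.filter (fun X => ¬ dot2 u (X - P) < 0 ∧ ¬ 0 < dot2 u (X - P)) = {P} := by
      ext X
      simp only [Finset.mem_filter, Finset.mem_singleton]
      constructor
      · rintro ⟨hXS, h1', h2'⟩
        by_contra hne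
        exact hgen P hP X hXS (fun he => hne he.symm)
          (le_antisymm (not_lt.mp h2') (not_lt.mp h1'))
      · rintro rfl
        exact ⟨hP, by simp [dot2], by simp [dot2]⟩
    rw [e1, e2] at h2
    have hc1 : ({P} : Finset (ℝ × ℝ)).card = 1 := Finset.card_singleton P
    simp only [hL, hR]
    omega
  have hbound : ∀ P ∈ A, (m : ℤ) + 1 - k ≤ L P ∧ L P ≤ (m : ℤ) + k := by
    intro P hPA
    obtain ⟨hPS, hdegP⟩ := Finset.mem_filter.mp hPA
    have hkey1 := key S hgp u hu hgen m hm P hPS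
    have hu' : 0 < (-u).1 ^ 2 + (-u).2 ^ 2 := by
      simp only [Prod.fst_neg, Prod.snd_neg, neg_sq]; exact hu
    have hgen' : ∀ P' ∈ S, ∀ Q ∈ S, P' ≠ Q → dot2 (-u) (Q - P') ≠ 0 := by
      intro P' hP' Q hQ hne h0
      apply hgen P' hP' Q hQ hne
      have he : dot2 (-u) (Q - P') = -dot2 u (Q - P') := by
        simp only [dot2, Prod.fst_neg, Prod.snd_neg]; ring
      rw [he] at h0; linarith
    have hkey2 := key S hgp (-u) hu' hgen' m hm P hPS
    have hfe : S.filter (fun X => dot2 (-u) (X - P) < 0)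
        = S.filter (fun X => 0 < dot2 u (X - P)) := by
      apply Finset.filter_congr
      intro X _
      have he : dot2 (-u) (X - P) = -dot2 u (X - P) := by
        simp only [dot2, Prod.fst_neg, Prod.snd_neg]; ring
      rw [he]
      constructor <;> intro h <;> linarith
    rw [hfe] at hkey2
    have hLRP := hLR P hPS
    simp only [hL, hR] at hLRP ⊢
    omega
  have hinj : Set.InjOn L ↑A := by
    have hmono : ∀ Pc Pd, Pc ∈ S → Pd ∈ S → 0 < dot2 u (Pd - Pc) → L Pc < L Pd := by
      intro Pc Pd hPc hPd hd
      have hss : S.filter (fun X => dot2 u (X - Pc) < 0)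
          ⊂ S.filter (fun X => dot2 u (X - Pd) < 0) := by
        constructor
        · intro X hX
          obtain ⟨hXS, hXd⟩ := Finset.mem_filter.mp hX
          refine Finset.mem_filter.mpr ⟨hXS, ?_⟩
          have e1 : dot2 u (X - Pc) = dot2 u X - dot2 u Pc := by
            simp only [dot2, Prod.fst_sub, Prod.snd_sub]; ring
          have e2 : dot2 u (X - Pd) = dot2 u X - dot2 u Pd := by
            simp only [dot2, Prod.fst_sub, Prod.snd_sub]; ring
          have e3 : dot2 u (Pd - Pc) = dot2 u Pd - dot2 u Pc := by
            simp only [dot2, Prod.fst_sub, Prod.snd_sub]; ring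
          rw [e2]; rw [e1] at hXd; rw [e3] at hd; linarith
        · intro hsub
          have hPcin : Pc ∈ S.filter (fun X => dot2 u (X - Pd) < 0) := by
            refine Finset.mem_filter.mpr ⟨hPc, ?_⟩
            have e3 : dot2 u (Pc - Pd) = -dot2 u (Pd - Pc) := by
              simp only [dot2, Prod.fst_sub, Prod.snd_sub]; ring
            rw [e3]; linarith
          have hcon := Finset.mem_filter.mp (hsub hPcin)
          have : dot2 u (Pc - Pc) = 0 := by simp [dot2]
          linarith [hcon.2]
      have hlt := Finset.card_lt_card hss
      simp only [hL]
      exact_mod_cast hlt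
    intro P1 hP1 P2 hP2 heq
    simp only [Finset.mem_coe] at hP1 hP2
    have hP1S := (Finset.mem_filter.mp hP1).1
    have hP2S := (Finset.mem_filter.mp hP2).1
    by_contra hne
    rcases (hgen P1 hP1S P2 hP2S hne).lt_or_gt with h | h
    · have hflip : 0 < dot2 u (P1 - P2) := by
        have e3 : dot2 u (P1 - P2) = -dot2 u (P2 - P1) := by
          simp only [dot2, Prod.fst_sub, Prod.snd_sub]; ring
        rw [e3]; linarith
      have := hmono P2 P1 hP2S hP1S hflip
      linarith [this, heq.le, heq.ge]
    · have := hmono P1 P2 hP1S hP2S h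
      linarith [this, heq.le, heq.ge]
  have hsub : ∀ P ∈ A, L P ∈ Finset.Icc ((m : ℤ) + 1 - k) ((m : ℤ) + k) :=
    fun P hPA => Finset.mem_Icc.mpr (hbound P hPA)
  have hcount := Finset.card_le_card_of_injOn L hsub hinj
  have hIcc : (Finset.Icc ((m : ℤ) + 1 - k) ((m : ℤ) + k)).card = 2 * k := by
    rw [Int.card_Icc]
    omega
  omega
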